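/- Fix d ≥ 1, A ∈ 𝓡, r ≥ 0, and T ∈ (0,∞) with m(T) > 0. Suppose Assumption 1.1 holds, Assumption 3.2 holds at T, the claim vectors {X^(i), i ≥ 1} are RD_A, and the tail F̄_A(x) := P(X ∈ x·A) is positive for every x > 0. Define J_x(T) := Σ_{i≥1} 1{X^(i) e^{−r τ_i} ∈ x·A, τ_i ≤ T} and Λ_x := E[J_x(T)] = ∫_{[0,T]} P(X e^{−r s} ∈ x·A) ν(ds). Then P(J_x(T) ≥ 1) ∼ Λ_x as x → ∞. -/

import Mathlib

open MeasureTheory ProbabilityTheory Filter Topology Set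
open scoped Pointwise ENNReal NNReal

noncomputable section

/-- The family `𝓡` of open increasing subsets of `ℝ^d` with convex complement,
whose closure avoids the origin. -/
def InRfam (d : ℕ) (A : Set (Fin d → ℝ)) : Prop :=
  IsOpen A ∧ (∀ x ∈ A, ∀ z : Fin d → ℝ, (∀ i, 0 ≤ z i) → x + z ∈ A) ∧
    Convex ℝ Aᶜ ∧ (0 : Fin d → ℝ) ∉ closure A

/-- The functional `z ↦ z_A = sup {u > 0 : z ∈ u • A}` (real `sSup`, so `sup ∅ = 0`). -/
def projA {d : ℕ} (A : Set (Fin d → ℝ)) (z : Fin d → ℝ) : ℝ :=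
  sSup {u : ℝ | 0 < u ∧ z ∈ u • A}

/-- The tail `Ḡ_A(x) = P(Z_A > x)` of the one-dimensional distribution `G_A`
associated with a distribution `G` on `ℝ^d` and a set `A ∈ 𝓡`. -/
def tailA {d : ℕ} (A : Set (Fin d → ℝ)) (G : Measure (Fin d → ℝ)) (x : ℝ) : ℝ :=
  (G {z | x < projA A z}).toReal

/-- Product of two measures (via `bind`, no instance assumptions). -/
def mprod {α β : Type*} [MeasurableSpace α] [MeasurableSpace β]
    (μ : Measure α) (ν : Measure β) : Measure (α × β) :=
  μ.bind fun a => ν.map (Prod.mk a)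

/-- Tail at `x` of `Z¹_A + Z²_A` for independent `Z¹ ∼ G₁`, `Z² ∼ G₂`. -/
def tail2A {d : ℕ} (A : Set (Fin d → ℝ)) (G₁ G₂ : Measure (Fin d → ℝ)) (x : ℝ) : ℝ :=
  ((mprod G₁ G₂) {p | x < projA A p.1 + projA A p.2}).toReal

/-- `G ∈ 𝒮_A`: the distribution `G_A` has everywhere positive tail and is
subexponential, i.e. `P(Z¹_A + Z²_A > x) ∼ 2 Ḡ_A(x)` for independent copies. -/
def SubexpA {d : ℕ} (A : Set (Fin d → ℝ)) (G : Measure (Fin d → ℝ)) : Prop :=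
  (∀ x : ℝ, 0 < tailA A G x) ∧
    Tendsto (fun x => tail2A A G G x / tailA A G x) atTop (𝓝 2)

/-- Convolution: the law of the sum of independent draws from `μ` and `ν`. -/
def mconv {d : ℕ} (μ ν : Measure (Fin d → ℝ)) : Measure (Fin d → ℝ) :=
  (mprod μ ν).map fun p => p.1 + p.2

/-- Regression dependence with explicit constants `x₀, K`, in integrated form:
for every index `i`, finite nonempty `J` not containing `i`, level `xi > x₀` and
measurable set `S` of conditioning values all `> x₀`,
`P(Z_i > xi, (Z_j)_{j∈J} ∈ S) ≤ K · Ḡ_i(xi) · P((Z_j)_{j∈J} ∈ S)`. -/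
def RDwith {Ω : Type*} [MeasurableSpace Ω] (P : Measure Ω) (x₀ K : ℝ)
    {ι : Type*} (Z : ι → Ω → ℝ) : Prop :=
  ∀ i : ι, ∀ J : Finset ι, J.Nonempty → i ∉ J → ∀ xi : ℝ, x₀ < xi →
    ∀ S : Set (J → ℝ), MeasurableSet S → (∀ v ∈ S, ∀ j : J, x₀ < v j) →
      (P {ω | xi < Z i ω ∧ (fun j : J => Z j.1 ω) ∈ S}).toReal ≤
        K * (P {ω | xi < Z i ω}).toReal * (P {ω | (fun j : J => Z j.1 ω) ∈ S}).toReal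

/-- Regression dependence (`RD`). -/
def RD {Ω : Type*} [MeasurableSpace Ω] (P : Measure Ω) {ι : Type*} (Z : ι → Ω → ℝ) : Prop :=
  ∃ x₀ > (0 : ℝ), ∃ K > (0 : ℝ), RDwith P x₀ K Z

/-- `RD_A` for random vectors: the projections `Z^{(i)}_A` are `RD`. -/
def RDA {Ω : Type*} [MeasurableSpace Ω] (P : Measure Ω) {d : ℕ} (A : Set (Fin d → ℝ))
    {ι : Type*} (Z : ι → Ω → Fin d → ℝ) : Prop :=
  RD P fun i ω => projA A (Z i ω)

/-- Quasi asymptotic independence (`QAI`). -/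
def QAI {Ω : Type*} [MeasurableSpace Ω] (P : Measure Ω) {ι : Type*} (Z : ι → Ω → ℝ) : Prop :=
  ∀ i j : ι, i ≠ j →
    Tendsto (fun x : ℝ => (P {ω | x < Z i ω ∧ x < Z j ω}).toReal /
      ((P {ω | x < Z i ω}).toReal + (P {ω | x < Z j ω}).toReal)) atTop (𝓝 0)

/-- `QAI_A` for random vectors: the projections `Z^{(i)}_A` are `QAI`. -/
def QAIA {Ω : Type*} [MeasurableSpace Ω] (P : Measure Ω) {d : ℕ} (A : Set (Fin d → ℝ))
    {ι : Type*} (Z : ι → Ω → Fin d → ℝ) : Prop :=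
  QAI P fun i ω => projA A (Z i ω)

/-- The consistent variation class `𝒞` for a tail function `g`. -/
def ClassC (g : ℝ → ℝ) : Prop :=
  Tendsto (fun b : ℝ => limsup (fun x => g (b * x) / g x) atTop) (𝓝[<] (1 : ℝ)) (𝓝 1)

/-- The positively decreasing class `𝒫_𝒟` for a tail function `g`. -/
def ClassPD (g : ℝ → ℝ) : Prop :=
  ∃ v > (1 : ℝ), limsup (fun x => g (v * x) / g x) atTop < 1

/-- Upper Matuszewska index of a tail function. -/
def Jplus (g : ℝ → ℝ) : ℝ :=
  -limUnder atTop fun v : ℝ => Real.log (liminf (fun x => g (v * x) / g x) atTop) / Real.log v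

/-- Lower Matuszewska index of a tail function. -/
def Jminus (g : ℝ → ℝ) : ℝ :=
  -limUnder atTop fun v : ℝ => Real.log (limsup (fun x => g (v * x) / g x) atTop) / Real.log v

/-- `F ∈ MRV(α, μ)` with associated regularly varying tail `Vbar`: `Vbar` is the
tail of a distribution on `ℝ`, regularly varying with index `−α`; `μ` is a nonzero
measure, finite on Borel sets at positive distance from the origin; and
`P(X ∈ x • B)/Vbar x → μ(B)` for all such `B` with `μ(∂B) = 0`. -/
def IsMRV {d : ℕ} (F : Measure (Fin d → ℝ)) (α : ℝ) (μ : Measure (Fin d → ℝ))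
    (Vbar : ℝ → ℝ) : Prop :=
  (∃ V : Measure ℝ, IsProbabilityMeasure V ∧ ∀ x : ℝ, Vbar x = (V (Ioi x)).toReal) ∧
    (∀ᶠ x in atTop, 0 < Vbar x) ∧
    (∀ t : ℝ, 0 < t → Tendsto (fun x => Vbar (t * x) / Vbar x) atTop (𝓝 (t ^ (-α)))) ∧
    μ ≠ 0 ∧
    (∀ B : Set (Fin d → ℝ), MeasurableSet B → (∃ ε > (0 : ℝ), ∀ z ∈ B, ε ≤ ‖z‖) → μ B ≠ ⊤) ∧
    (∀ B : Set (Fin d → ℝ), MeasurableSet B → (∃ ε > (0 : ℝ), ∀ z ∈ B, ε ≤ ‖z‖) →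
      μ (frontier B) = 0 →
      Tendsto (fun x => (F (x • B)).toReal / Vbar x) atTop (𝓝 ((μ B).toReal)))

/-- Second factorial moment measure `α⁽²⁾` of the point process with points `τ i`:
the mean measure of the off-diagonal pairs `(τ i, τ j)`, `i ≠ j`. -/
def secondFactorial {Ω : Type*} [MeasurableSpace Ω] (P : Measure Ω) (τ : ℕ → Ω → ℝ) :
    Measure (ℝ × ℝ) :=
  Measure.sum fun p : {p : ℕ × ℕ // p.1 ≠ p.2} =>
    P.map fun ω => (τ p.1.1 ω, τ p.1.2 ω)

/-- The product measure `ν × ν`, where `ν(B) = ∑ᵢ P(τᵢ ∈ B)` is the mean measure. -/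
def nuProd {Ω : Type*} [MeasurableSpace Ω] (P : Measure Ω) (τ : ℕ → Ω → ℝ) :
    Measure (ℝ × ℝ) :=
  Measure.sum fun p : ℕ × ℕ => mprod (P.map (τ p.1)) (P.map (τ p.2))

/-- Assumption 3.2 at horizon `T` with constant `C`:
`α⁽²⁾(B) ≤ C · (ν × ν)(B)` for every Borel `B ⊆ [0,T]²`. -/
def Assumption32 {Ω : Type*} [MeasurableSpace Ω] (P : Measure Ω) (τ : ℕ → Ω → ℝ)
    (T C : ℝ) : Prop :=
  ∀ B : Set (ℝ × ℝ), MeasurableSet B → B ⊆ Icc (0 : ℝ) T ×ˢ Icc (0 : ℝ) T →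
    secondFactorial P τ B ≤ ENNReal.ofReal C * nuProd P τ B

/-- Discounted aggregate claims up to a finite time `T`. -/
def Dfin {Ω : Type*} {d : ℕ} (r : ℝ) (X : ℕ → Ω → Fin d → ℝ) (τ : ℕ → Ω → ℝ)
    (T : ℝ) (ω : Ω) : Fin d → ℝ :=
  ∑' i : ℕ, Set.indicator {ω' | τ i ω' ≤ T} (fun ω' => Real.exp (-(r * τ i ω')) • X i ω') ω

/-- Discounted aggregate claims over the infinite time horizon. -/
def Dinf {Ω : Type*} {d : ℕ} (r : ℝ) (X : ℕ → Ω → Fin d → ℝ) (τ : ℕ → Ω → ℝ)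
    (ω : Ω) : Fin d → ℝ :=
  ∑' i : ℕ, Real.exp (-(r * τ i ω)) • X i ω

/-- `J_x(T)`: the number of discounted claims entering `x • A` by time `T`. -/
def Jcount {Ω : Type*} {d : ℕ} (r : ℝ) (X : ℕ → Ω → Fin d → ℝ) (τ : ℕ → Ω → ℝ)
    (A : Set (Fin d → ℝ)) (T x : ℝ) (ω : Ω) : ℝ≥0∞ :=
  ∑' i : ℕ,
    Set.indicator {ω' | τ i ω' ≤ T ∧ Real.exp (-(r * τ i ω')) • X i ω' ∈ x • A}
      (fun _ => (1 : ℝ≥0∞)) ω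

/-- Pathwise discounted stochastic integral `∫₀ᵗ e^{−rs} B(ds)
  = e^{−rt} B(t) + r ∫₀ᵗ e^{−rs} B(s) ds`. -/
def discBM {Ω : Type*} (r : ℝ) (Bi : ℝ → Ω → ℝ) (t : ℝ) (ω : Ω) : ℝ :=
  Real.exp (-(r * t)) * Bi t ω + r * ∫ s in (0 : ℝ)..t, Real.exp (-(r * s)) * Bi s ω

/-- The insurer's surplus process `U(t)`. -/
def surplus {Ω : Type*} {d : ℕ} (r x : ℝ) (l : Fin d → ℝ) (c : Fin d → ℝ → Ω → ℝ)
    (δv : Fin d → ℝ) (Bm : Fin d → ℝ → Ω → ℝ) (X : ℕ → Ω → Fin d → ℝ) (τ : ℕ → Ω → ℝ)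
    (t : ℝ) (ω : Ω) : Fin d → ℝ :=
  fun k => x * l k + (∫ s in (0 : ℝ)..t, Real.exp (-(r * s)) * c k s ω)
    + δv k * discBM r (Bm k) t ω - Dfin r X τ t ω k

-- AUX START
section Aux

variable {d : ℕ} {A : Set (Fin d → ℝ)}

lemma mem_smul_anti (hA : InRfam d A) {z : Fin d → ℝ} (hz : ∀ k, 0 ≤ z k)
    {u v : ℝ} (hu : 0 < u) (huv : u ≤ v) (hv : z ∈ v • A) : z ∈ u • A := by
  have hv0 : (0:ℝ) < v := lt_of_lt_of_le hu huv
  rw [mem_smul_set_iff_inv_smul_mem₀ hv0.ne'] at hv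
  rw [mem_smul_set_iff_inv_smul_mem₀ hu.ne']
  have key : u⁻¹ • z = v⁻¹ • z + (u⁻¹ - v⁻¹) • z := by
    rw [← add_smul]; ring_nf
  rw [key]
  refine hA.2.1 _ hv _ (fun k => ?_)
  have h1 : v⁻¹ ≤ u⁻¹ := inv_anti₀ hu huv
  have h2 : (0:ℝ) ≤ u⁻¹ - v⁻¹ := by linarith
  simpa [Pi.smul_apply, smul_eq_mul] using mul_nonneg h2 (hz k)

lemma exists_gt_mem_smul (hA : InRfam d A) {z : Fin d → ℝ} {u : ℝ} (hu : 0 < u)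
    (h : z ∈ u • A) : ∃ c, u < c ∧ 0 < c ∧ z ∈ c • A := by
  rw [mem_smul_set_iff_inv_smul_mem₀ hu.ne'] at h
  have hcont : ContinuousAt (fun c : ℝ => c⁻¹ • z) u :=
    ((continuousAt_inv₀ hu.ne').smul continuousAt_const)
  have hev : ∀ᶠ c in 𝓝 u, c⁻¹ • z ∈ A := hcont.eventually_mem (hA.1.mem_nhds h)
  have hev' : ∀ᶠ c in 𝓝[>] u, c⁻¹ • z ∈ A := hev.filter_mono nhdsWithin_le_nhds
  obtain ⟨c, hcA, hc⟩ := (hev'.and eventually_mem_nhdsWithin).exists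
  exact ⟨c, hc, hu.trans hc, by
    rw [mem_smul_set_iff_inv_smul_mem₀ (hu.trans hc).ne']; exact hcA⟩

lemma exists_ball_disjoint (hA : InRfam d A) : ∃ ε > (0:ℝ), ∀ a ∈ A, ε ≤ ‖a‖ := by
  have h := hA.2.2.2
  rw [Metric.mem_closure_iff] at h
  push_neg at h
  obtain ⟨ε, hε, h⟩ := h
  refine ⟨ε, hε, fun a ha => ?_⟩
  have := h a ha
  simpa [dist_eq_norm] using this

lemma mem_smul_iff_lt_projA (hA : InRfam d A) {z : Fin d → ℝ} (hz : ∀ k, 0 ≤ z k)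
    {u : ℝ} (hu : 0 < u) : z ∈ u • A ↔ u < projA A z := by
  obtain ⟨ε, hε, hball⟩ := exists_ball_disjoint hA
  have hbdd : BddAbove {w : ℝ | 0 < w ∧ z ∈ w • A} := by
    refine ⟨‖z‖ / ε, fun w hw => ?_⟩
    have hw0 := hw.1
    obtain ⟨a, haA, haz⟩ := hw.2
    have hna : ε ≤ ‖a‖ := hball a haA
    have hzn : ‖z‖ = w * ‖a‖ := by
      rw [← haz, norm_smul, Real.norm_eq_abs, abs_of_pos hw0]
    rw [le_div_iff₀ hε]
    calc w * ε ≤ w * ‖a‖ := by nlinarith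
      _ = ‖z‖ := hzn.symm
  constructor
  · intro h
    obtain ⟨c, huc, hc0, hcz⟩ := exists_gt_mem_smul hA hu h
    exact lt_of_lt_of_le huc (le_csSup hbdd ⟨hc0, hcz⟩)
  · intro h
    have hne : {w : ℝ | 0 < w ∧ z ∈ w • A}.Nonempty := by
      by_contra hemp
      rw [not_nonempty_iff_eq_empty] at hemp
      rw [projA, hemp, Real.sSup_empty] at h
      exact absurd h (not_lt.2 hu.le)
    obtain ⟨c, hcS, huc⟩ := exists_lt_of_lt_csSup hne h
    exact mem_smul_anti hA hz hu huc.le hcS.2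

/-- scaling identity for membership. -/
lemma exp_smul_mem_iff {x rs : ℝ} (hx : 0 < x) (a : Fin d → ℝ) :
    Real.exp (-rs) • a ∈ x • A ↔ a ∈ (x * Real.exp rs) • A := by
  have he : Real.exp rs ≠ 0 := (Real.exp_pos rs).ne'
  rw [mem_smul_set_iff_inv_smul_mem₀ hx.ne', mem_smul_set_iff_inv_smul_mem₀ (by positivity)]
  rw [smul_smul, mul_inv, Real.exp_neg]

lemma mem_smul_set_iff_inv {c : ℝ} (hc : c ≠ 0) (a : Fin d → ℝ) :
    a ∈ c • A ↔ c⁻¹ • a ∈ A := mem_smul_set_iff_inv_smul_mem₀ hc A a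

end Aux
-- AUX END
section Aux2

variable {d : ℕ} {A : Set (Fin d → ℝ)}

/-- tail measure of scaled sets tends to zero. -/
lemma tendsto_smul_measure_zero (hA : InRfam d A) (F : Measure (Fin d → ℝ))
    [IsProbabilityMeasure F] : Tendsto (fun x : ℝ => F (x • A)) atTop (𝓝 0) := by
  obtain ⟨ε, hε, hball⟩ := exists_ball_disjoint hA
  have hS : ∀ R : ℝ, MeasurableSet {z : Fin d → ℝ | R ≤ ‖z‖} := fun R =>
    (isClosed_le continuous_const continuous_norm).measurableSet
  have hmono : Antitone (fun R : ℝ => {z : Fin d → ℝ | R ≤ ‖z‖}) :=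
    fun R R' hRR' z hz => le_trans hRR' hz
  have hempty : ⋂ R : ℝ, {z : Fin d → ℝ | R ≤ ‖z‖} = ∅ := by
    ext z
    simp only [mem_iInter, mem_setOf_eq, mem_empty_iff_false, iff_false, not_forall, not_le]
    exact ⟨‖z‖ + 1, by linarith⟩
  have h1 : Tendsto (fun R : ℝ => F {z | R ≤ ‖z‖}) atTop (𝓝 0) := by
    have := tendsto_measure_iInter_atTop (μ := F) (fun R => (hS R).nullMeasurableSet) hmono
      ⟨0, measure_ne_top _ _⟩
    rw [hempty, measure_empty] at this
    exact this
  have h2 : Tendsto (fun x : ℝ => F {z : Fin d → ℝ | ε * x ≤ ‖z‖}) atTop (𝓝 0) :=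
    h1.comp (Tendsto.const_mul_atTop hε tendsto_id)
  refine tendsto_of_tendsto_of_tendsto_of_le_of_le' tendsto_const_nhds h2
    (Eventually.of_forall fun x => zero_le) ?_
  filter_upwards [eventually_gt_atTop 0] with x hx
  refine measure_mono ?_
  rintro z ⟨a, haA, rfl⟩
  have hna : ε ≤ ‖a‖ := hball a haA
  simp only [mem_setOf_eq, norm_smul, Real.norm_eq_abs, abs_of_pos hx]
  calc ε * x = x * ε := mul_comm _ _
    _ ≤ x * ‖a‖ := by nlinarith

/-- measurability of the scaled-tail function. -/
lemma measurable_W (hA : InRfam d A) (F : Measure (Fin d → ℝ)) [IsProbabilityMeasure F]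
    {x r : ℝ} (hx : 0 < x) :
    Measurable fun s : ℝ => F ((x * Real.exp (r * s)) • A) := by
  have hMeq : {p : ℝ × (Fin d → ℝ) | p.2 ∈ (x * Real.exp (r * p.1)) • A}
      = (fun p : ℝ × (Fin d → ℝ) => (x * Real.exp (r * p.1))⁻¹ • p.2) ⁻¹' A := by
    ext p
    exact mem_smul_set_iff_inv_smul_mem₀ (by positivity) _ _
  have hcont : Continuous fun p : ℝ × (Fin d → ℝ) => (x * Real.exp (r * p.1))⁻¹ • p.2 := by
    refine Continuous.smul (f := fun p : ℝ × (Fin d → ℝ) => (x * Real.exp (r * p.1))⁻¹) ?_ continuous_snd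
    refine Continuous.inv₀ ?_ (fun p => by positivity)
    exact continuous_const.mul (Real.continuous_exp.comp (continuous_const.mul continuous_fst))
  have hM : MeasurableSet {p : ℝ × (Fin d → ℝ) | p.2 ∈ (x * Real.exp (r * p.1)) • A} := by
    rw [hMeq]; exact hcont.measurable (hA.1.measurableSet)
  exact measurable_measure_prodMk_left (ν := F) hM

/-- Fubini via independence. -/
lemma indep_fubini {Ω β γ : Type*} [MeasurableSpace Ω] [MeasurableSpace β] [MeasurableSpace γ]
    (P : Measure Ω) [IsProbabilityMeasure P] {σ : Ω → β} {Y : Ω → γ}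
    (hσ : Measurable σ) (hY : Measurable Y) (hind : IndepFun σ Y P)
    {M : Set (β × γ)} (hM : MeasurableSet M) :
    P {ω | (σ ω, Y ω) ∈ M} = ∫⁻ s, (P.map Y) (Prod.mk s ⁻¹' M) ∂(P.map σ) := by
  haveI : IsProbabilityMeasure (P.map Y) := Measure.isProbabilityMeasure_map hY.aemeasurable
  haveI : IsProbabilityMeasure (P.map σ) := Measure.isProbabilityMeasure_map hσ.aemeasurable
  have hmap := (indepFun_iff_map_prod_eq_prod_map_map hσ.aemeasurable hY.aemeasurable).1 hind
  have h1 : P {ω | (σ ω, Y ω) ∈ M} = (P.map fun ω => (σ ω, Y ω)) M :=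
    (Measure.map_apply (hσ.prodMk hY) hM).symm
  rw [h1, hmap, Measure.prod_apply hM]

/-- Bonferroni lower bound in ENNReal form. -/
lemma bonferroni {Ω : Type*} [MeasurableSpace Ω] (P : Measure Ω) (E : ℕ → Set Ω)
    (hE : ∀ i, MeasurableSet (E i)) :
    ∑' i, P (E i) ≤ P (⋃ i, E i)
      + ∑' (p : {p : ℕ × ℕ // p.1 ≠ p.2}), P (E p.1.1 ∩ E p.1.2) := by
  classical
  set D : ℕ → Set Ω := fun i => E i \ ⋃ j ∈ Finset.range i, E j with hD
  have hDmeas : ∀ i, MeasurableSet (D i) := fun i =>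
    (hE i).diff (MeasurableSet.biUnion (Finset.range i).countable_toSet (fun j _ => hE j))
  have hDsubE : ∀ i, D i ⊆ E i := fun i => diff_subset
  have hDdisj : Pairwise (Function.onFun Disjoint D) := by
    intro i j hij
    rcases lt_or_gt_of_ne hij with h | h
    · refine Set.disjoint_left.2 fun ω hωi hωj => ?_
      exact hωj.2 (mem_biUnion (Finset.mem_range.2 h) (hDsubE i hωi))
    · refine Set.disjoint_left.2 fun ω hωi hωj => ?_
      exact hωi.2 (mem_biUnion (Finset.mem_range.2 h) (hDsubE j hωj))
  have hDunion : ⋃ i, D i = ⋃ i, E i := by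
    apply Set.Subset.antisymm (iUnion_mono hDsubE)
    intro ω hω
    have hex : ∃ i, ω ∈ E i := mem_iUnion.1 hω
    refine mem_iUnion.2 ⟨Nat.find hex, Nat.find_spec hex, ?_⟩
    intro hmem
    obtain ⟨j, hj, hωj⟩ := mem_iUnion₂.1 hmem
    exact Nat.find_min hex (Finset.mem_range.1 hj) hωj
  have hsplit : ∀ i, P (E i) ≤ P (D i) + ∑' j, if j < i then P (E i ∩ E j) else 0 := by
    intro i
    have hsub : E i ⊆ D i ∪ ⋃ j ∈ Finset.range i, (E i ∩ E j) := by
      intro ω hω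
      by_cases hc : ∃ j ∈ Finset.range i, ω ∈ E j
      · obtain ⟨j, hj, hωj⟩ := hc
        exact Or.inr (mem_biUnion hj ⟨hω, hωj⟩)
      · push_neg at hc
        exact Or.inl ⟨hω, fun hmem => by
          obtain ⟨j, hj, hωj⟩ := mem_iUnion₂.1 hmem
          exact hc j hj hωj⟩
    calc P (E i) ≤ P (D i ∪ ⋃ j ∈ Finset.range i, (E i ∩ E j)) := measure_mono hsub
      _ ≤ P (D i) + P (⋃ j ∈ Finset.range i, (E i ∩ E j)) := measure_union_le _ _
      _ ≤ P (D i) + ∑ j ∈ Finset.range i, P (E i ∩ E j) := by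
          gcongr
          exact measure_biUnion_finset_le _ _
      _ = P (D i) + ∑' j, if j < i then P (E i ∩ E j) else 0 := by
          congr 1
          rw [tsum_eq_sum (s := Finset.range i) (fun j hj => if_neg (by simpa using hj))]
          exact (Finset.sum_congr rfl fun j hj => (if_pos (Finset.mem_range.1 hj))).symm
  calc ∑' i, P (E i) ≤ ∑' i, (P (D i) + ∑' j, if j < i then P (E i ∩ E j) else 0) :=
        ENNReal.tsum_le_tsum hsplit
    _ = (∑' i, P (D i)) + ∑' i, ∑' j, if j < i then P (E i ∩ E j) else 0 :=
        ENNReal.tsum_add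
    _ ≤ P (⋃ i, E i) + ∑' (p : {p : ℕ × ℕ // p.1 ≠ p.2}), P (E p.1.1 ∩ E p.1.2) := by
        gcongr
        · rw [← measure_iUnion hDdisj hDmeas, hDunion]
        · have hpr : (∑' (i : ℕ) (j : ℕ), if j < i then P (E i ∩ E j) else 0)
              = ∑' p : ℕ × ℕ, if p.2 < p.1 then P (E p.1 ∩ E p.2) else 0 :=
            (ENNReal.tsum_prod (f := fun i j => if j < i then P (E i ∩ E j) else 0)).symm
          have h2 : (∑' (p : {p : ℕ × ℕ // p.1 ≠ p.2}), P (E p.1.1 ∩ E p.1.2))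
              = ∑' p : ℕ × ℕ, Set.indicator {p : ℕ × ℕ | p.1 ≠ p.2}
                  (fun p => P (E p.1 ∩ E p.2)) p :=
            tsum_subtype {p : ℕ × ℕ | p.1 ≠ p.2} (fun p => P (E p.1 ∩ E p.2))
          rw [hpr, h2]
          refine ENNReal.tsum_le_tsum fun p => ?_
          by_cases hp : p.2 < p.1
          · rw [if_pos hp, indicator_of_mem (by exact (ne_of_gt hp : p.1 ≠ p.2))]
          · rw [if_neg hp]; exact zero_le
  
end Aux2
section Aux3

variable {Ω : Type*} [MeasurableSpace Ω] {P : Measure Ω} [IsProbabilityMeasure P]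
variable {d : ℕ} {A : Set (Fin d → ℝ)}

lemma rd_pair_bound (hA : InRfam d A)
    (X : ℕ → Ω → Fin d → ℝ) (hXmeas : ∀ i, Measurable (X i))
    (hXnn : ∀ i ω k, 0 ≤ X i ω k)
    (F : Measure (Fin d → ℝ)) (hXdist : ∀ i, P.map (X i) = F)
    {x₀ K : ℝ} (hK : 0 ≤ K)
    (hRDw : RDwith P x₀ K (fun i ω => projA A (X i ω)))
    {i j : ℕ} (hij : i ≠ j) {u₁ u₂ : ℝ} (h₁ : x₀ < u₁) (h₂ : x₀ < u₂)
    (hu₁ : 0 < u₁) (hu₂ : 0 < u₂) :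
    P {ω | X i ω ∈ u₁ • A ∧ X j ω ∈ u₂ • A}
      ≤ ENNReal.ofReal K * (F (u₁ • A) * F (u₂ • A)) := by
  classical
  set Z : ℕ → Ω → ℝ := fun i ω => projA A (X i ω) with hZ
  set J : Finset ℕ := {j} with hJ
  have hjJ : j ∈ J := Finset.mem_singleton_self j
  set S : Set (J → ℝ) := {f | u₂ < f ⟨j, hjJ⟩} with hSdef
  have hSmeas : MeasurableSet S := (measurable_pi_apply (⟨j, hjJ⟩ : J)) measurableSet_Ioi
  have hSval : ∀ v ∈ S, ∀ j' : J, x₀ < v j' := by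
    intro v hv j'
    have hj' : j' = ⟨j, hjJ⟩ := Subtype.ext (Finset.mem_singleton.1 j'.2)
    rw [hj']
    exact lt_trans h₂ hv
  have hiJ : i ∉ J := by simp [hJ, hij]
  have key := hRDw i J ⟨j, hjJ⟩ hiJ u₁ h₁ S hSmeas hSval
  have hset1 : {ω | X i ω ∈ u₁ • A ∧ X j ω ∈ u₂ • A}
      = {ω | u₁ < Z i ω ∧ (fun j' : J => Z j' ω) ∈ S} := by
    ext ω
    simp only [mem_setOf_eq]
    rw [mem_smul_iff_lt_projA hA (hXnn i ω) hu₁, mem_smul_iff_lt_projA hA (hXnn j ω) hu₂]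
    exact Iff.rfl
  have hset2 : {ω | u₁ < Z i ω} = X i ⁻¹' (u₁ • A) := by
    ext ω
    simp only [mem_setOf_eq, mem_preimage]
    exact (mem_smul_iff_lt_projA hA (hXnn i ω) hu₁).symm
  have hset3 : {ω | (fun j' : J => Z j' ω) ∈ S} = X j ⁻¹' (u₂ • A) := by
    ext ω
    simp only [mem_setOf_eq, mem_preimage]
    exact (mem_smul_iff_lt_projA hA (hXnn j ω) hu₂).symm
  have hAmeas1 : MeasurableSet (u₁ • A) := (hA.1.smul₀ hu₁.ne').measurableSet
  have hAmeas2 : MeasurableSet (u₂ • A) := (hA.1.smul₀ hu₂.ne').measurableSet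
  have hF1 : P {ω | u₁ < Z i ω} = F (u₁ • A) := by
    rw [hset2, ← Measure.map_apply (hXmeas i) hAmeas1, hXdist i]
  have hF2 : P {ω | (fun j' : J => Z j' ω) ∈ S} = F (u₂ • A) := by
    rw [hset3, ← Measure.map_apply (hXmeas j) hAmeas2, hXdist j]
  rw [hset1]
  have hfin : P {ω | u₁ < Z i ω ∧ (fun j' : J => Z j' ω) ∈ S} ≠ ⊤ := measure_ne_top _ _
  calc P {ω | u₁ < Z i ω ∧ (fun j' : J => Z j' ω) ∈ S}
      = ENNReal.ofReal (P {ω | u₁ < Z i ω ∧ (fun j' : J => Z j' ω) ∈ S}).toReal :=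
        (ENNReal.ofReal_toReal hfin).symm
    _ ≤ ENNReal.ofReal (K * (P {ω | u₁ < Z i ω}).toReal
          * (P {ω | (fun j' : J => Z j' ω) ∈ S}).toReal) := ENNReal.ofReal_le_ofReal key
    _ = ENNReal.ofReal K * ENNReal.ofReal (P {ω | u₁ < Z i ω}).toReal
          * ENNReal.ofReal (P {ω | (fun j' : J => Z j' ω) ∈ S}).toReal := by
        rw [ENNReal.ofReal_mul (by positivity), ENNReal.ofReal_mul hK]
    _ = ENNReal.ofReal K * (F (u₁ • A) * F (u₂ • A)) := by
        rw [ENNReal.ofReal_toReal (measure_ne_top _ _),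
          ENNReal.ofReal_toReal (measure_ne_top _ _), hF1, hF2, mul_assoc]

end Aux3
section Aux4

variable {Ω : Type*} [MeasurableSpace Ω] {P : Measure Ω} [IsProbabilityMeasure P]
variable {d : ℕ} {A : Set (Fin d → ℝ)} {r T : ℝ} {F : Measure (Fin d → ℝ)}

lemma single_formula (hA : InRfam d A) [IsProbabilityMeasure F]
    {X : Ω → Fin d → ℝ} {σ : Ω → ℝ} (hX : Measurable X) (hσ : Measurable σ)
    (hind : IndepFun σ X P) (hXd : P.map X = F) (hσnn : ∀ ω, 0 ≤ σ ω)
    {x : ℝ} (hx : 0 < x) :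
    P {ω | σ ω ≤ T ∧ Real.exp (-(r * σ ω)) • X ω ∈ x • A}
      = ∫⁻ s, (Icc 0 T).indicator (fun s => F ((x * Real.exp (r * s)) • A)) s ∂(P.map σ) := by
  set M : Set (ℝ × (Fin d → ℝ)) :=
    {p | p.1 ≤ T ∧ Real.exp (-(r * p.1)) • p.2 ∈ x • A} with hMdef
  have h1 : MeasurableSet {p : ℝ × (Fin d → ℝ) | p.1 ≤ T} :=
    measurable_fst measurableSet_Iic
  have hco : Continuous fun p : ℝ × (Fin d → ℝ) => Real.exp (-(r * p.1)) • p.2 :=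
    (Real.continuous_exp.comp (continuous_const.mul continuous_fst).neg).smul continuous_snd
  have h2 : MeasurableSet ((fun p : ℝ × (Fin d → ℝ) => Real.exp (-(r * p.1)) • p.2) ⁻¹' (x • A)) :=
    hco.measurable (hA.1.smul₀ hx.ne').measurableSet
  have hMmeas : MeasurableSet M := h1.inter h2
  have key := indep_fubini P hσ hX hind hMmeas
  rw [hXd] at key
  have hLHS : {ω | σ ω ≤ T ∧ Real.exp (-(r * σ ω)) • X ω ∈ x • A}
      = {ω | (σ ω, X ω) ∈ M} := rfl
  rw [hLHS, key]
  refine lintegral_congr_ae ?_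
  have hnull : (P.map σ) (Iio 0) = 0 := by
    rw [Measure.map_apply hσ measurableSet_Iio]
    have : σ ⁻¹' (Iio 0) = ∅ := by
      ext ω; simp [not_lt.2 (hσnn ω)]
    rw [this, measure_empty]
  refine Filter.eventuallyEq_of_mem (s := Ici 0) ?_ ?_
  · rw [mem_ae_iff, compl_Ici]; exact hnull
  · intro s hs
    show F (Prod.mk s ⁻¹' M) = (Icc 0 T).indicator (fun s => F ((x * Real.exp (r * s)) • A)) s
    by_cases hsT : s ≤ T
    · have hslice : Prod.mk s ⁻¹' M = (x * Real.exp (r * s)) • A := by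
        ext a
        simp only [hMdef, mem_preimage, mem_setOf_eq, hsT, true_and]
        exact exp_smul_mem_iff hx a
      have hm : s ∈ Icc (0:ℝ) T := ⟨hs, hsT⟩
      rw [hslice, indicator_of_mem hm]
    · have hslice : Prod.mk s ⁻¹' M = ∅ := by
        rw [eq_empty_iff_forall_notMem]
        rintro a ⟨h1', _⟩
        exact hsT h1'
      have hm : s ∉ Icc (0:ℝ) T := fun hmem => hsT hmem.2
      rw [hslice, measure_empty, indicator_of_notMem hm]

lemma pair_bound_integral (hA : InRfam d A) [IsProbabilityMeasure F] (hr : 0 ≤ r)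
    (X : ℕ → Ω → Fin d → ℝ) (τ : ℕ → Ω → ℝ)
    (hXmeas : ∀ i, Measurable (X i)) (hτmeas : ∀ i, Measurable (τ i))
    (hXnn : ∀ i ω k, 0 ≤ X i ω k) (hXdist : ∀ i, P.map (X i) = F)
    (hτnn : ∀ i ω, 0 ≤ τ i ω)
    (hindep : IndepFun (fun ω i => X i ω) (fun ω i => τ i ω) P)
    {x₀ K : ℝ} (hK : 0 ≤ K) (hRDw : RDwith P x₀ K (fun i ω => projA A (X i ω)))
    {x : ℝ} (hx : x₀ < x) (hx0 : 0 < x) {i j : ℕ} (hij : i ≠ j) :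
    P ({ω | τ i ω ≤ T ∧ Real.exp (-(r * τ i ω)) • X i ω ∈ x • A}
        ∩ {ω | τ j ω ≤ T ∧ Real.exp (-(r * τ j ω)) • X j ω ∈ x • A})
      ≤ ∫⁻ st : ℝ × ℝ, ENNReal.ofReal K *
          ((Icc 0 T).indicator (fun s => F ((x * Real.exp (r * s)) • A)) st.1 *
           (Icc 0 T).indicator (fun s => F ((x * Real.exp (r * s)) • A)) st.2)
          ∂(P.map fun ω => (τ i ω, τ j ω)) := by
  set σ2 : Ω → ℝ × ℝ := fun ω => (τ i ω, τ j ω) with hσ2def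
  set Y2 : Ω → (Fin d → ℝ) × (Fin d → ℝ) := fun ω => (X i ω, X j ω) with hY2def
  have hσ2 : Measurable σ2 := (hτmeas i).prodMk (hτmeas j)
  have hY2 : Measurable Y2 := (hXmeas i).prodMk (hXmeas j)
  have hind2 : IndepFun σ2 Y2 P := by
    exact hindep.symm.comp
      ((measurable_pi_apply i).prodMk (measurable_pi_apply j))
      ((measurable_pi_apply i).prodMk (measurable_pi_apply j))
  set M : Set ((ℝ × ℝ) × ((Fin d → ℝ) × (Fin d → ℝ))) :=
    {q | (q.1.1 ≤ T ∧ Real.exp (-(r * q.1.1)) • q.2.1 ∈ x • A)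
        ∧ (q.1.2 ≤ T ∧ Real.exp (-(r * q.1.2)) • q.2.2 ∈ x • A)} with hMdef
  have hAop : MeasurableSet (x • A) := (hA.1.smul₀ hx0.ne').measurableSet
  have hMmeas : MeasurableSet M := by
    refine MeasurableSet.inter (MeasurableSet.inter ?_ ?_) (MeasurableSet.inter ?_ ?_)
    · exact (measurable_fst.fst) measurableSet_Iic
    · exact (((Real.continuous_exp.comp
        (continuous_const.mul continuous_fst.fst).neg).smul
        continuous_snd.fst).measurable) hAop
    · exact (measurable_fst.snd) measurableSet_Iic
    · exact (((Real.continuous_exp.comp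
        (continuous_const.mul continuous_fst.snd).neg).smul
        continuous_snd.snd).measurable) hAop
  have hLHS : {ω | τ i ω ≤ T ∧ Real.exp (-(r * τ i ω)) • X i ω ∈ x • A}
        ∩ {ω | τ j ω ≤ T ∧ Real.exp (-(r * τ j ω)) • X j ω ∈ x • A}
      = {ω | (σ2 ω, Y2 ω) ∈ M} := rfl
  have key := indep_fubini P hσ2 hY2 hind2 hMmeas
  rw [hLHS, key]
  refine lintegral_mono_ae ?_
  have hmem : Ici (0:ℝ) ×ˢ Ici (0:ℝ) ∈ ae (P.map σ2) := by
    rw [mem_ae_iff]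
    rw [Measure.map_apply hσ2 (measurableSet_Ici.prod measurableSet_Ici).compl]
    have : σ2 ⁻¹' (Ici (0:ℝ) ×ˢ Ici (0:ℝ))ᶜ = ∅ :=
      eq_empty_iff_forall_notMem.2 fun ω hω =>
        hω (Set.mem_prod.2 ⟨mem_Ici.2 (hτnn i ω), mem_Ici.2 (hτnn j ω)⟩)
    rw [this, measure_empty]
  refine Filter.eventually_of_mem hmem ?_
  rintro st ⟨hs0, ht0⟩
  by_cases hc : st.1 ≤ T ∧ st.2 ≤ T
  · set u₁ : ℝ := x * Real.exp (r * st.1) with hu₁def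
    set u₂ : ℝ := x * Real.exp (r * st.2) with hu₂def
    have hu₁0 : 0 < u₁ := by positivity
    have hu₂0 : 0 < u₂ := by positivity
    have hxu₁ : x ≤ u₁ := le_mul_of_one_le_right hx0.le
      (Real.one_le_exp (mul_nonneg hr hs0))
    have hxu₂ : x ≤ u₂ := le_mul_of_one_le_right hx0.le
      (Real.one_le_exp (mul_nonneg hr ht0))
    have hslice : Prod.mk st ⁻¹' M = {ab : (Fin d → ℝ) × (Fin d → ℝ) |
        ab.1 ∈ u₁ • A ∧ ab.2 ∈ u₂ • A} := by
      ext ab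
      simp only [hMdef, mem_preimage, mem_setOf_eq, hc.1, hc.2, true_and]
      rw [exp_smul_mem_iff hx0, exp_smul_mem_iff hx0]
    have hslicemeas : MeasurableSet {ab : (Fin d → ℝ) × (Fin d → ℝ) |
        ab.1 ∈ u₁ • A ∧ ab.2 ∈ u₂ • A} :=
      (measurable_fst ((hA.1.smul₀ hu₁0.ne').measurableSet)).inter
        (measurable_snd ((hA.1.smul₀ hu₂0.ne').measurableSet))
    have hmap : (P.map Y2) {ab : (Fin d → ℝ) × (Fin d → ℝ) |
        ab.1 ∈ u₁ • A ∧ ab.2 ∈ u₂ • A}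
        = P {ω | X i ω ∈ u₁ • A ∧ X j ω ∈ u₂ • A} :=
      Measure.map_apply hY2 hslicemeas
    rw [hslice, hmap]
    have hbd := rd_pair_bound hA X hXmeas hXnn F hXdist hK hRDw hij
      (lt_of_lt_of_le hx hxu₁) (lt_of_lt_of_le hx hxu₂) hu₁0 hu₂0
    refine hbd.trans_eq ?_
    have hm1 : st.1 ∈ Icc (0:ℝ) T := ⟨hs0, hc.1⟩
    have hm2 : st.2 ∈ Icc (0:ℝ) T := ⟨ht0, hc.2⟩
    rw [indicator_of_mem hm1, indicator_of_mem hm2]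
  · have hslice : Prod.mk st ⁻¹' M = ∅ := by
      rw [eq_empty_iff_forall_notMem]
      rintro ab ⟨⟨h1', _⟩, ⟨h2', _⟩⟩
      exact hc ⟨h1', h2'⟩
    rw [hslice, measure_empty]
    exact zero_le

end Aux4
lemma mprod_eq_prod {α β : Type*} [MeasurableSpace α] [MeasurableSpace β]
    (μ : Measure α) (ν : Measure β) : mprod μ ν = μ.prod ν :=
  (Measure.prod_def μ ν).symm

set_option maxHeartbeats 2000000 in
/-- Step (2) in the proof of Theorem 3.1: `P(J_x(T) ≥ 1) ∼ Λ_x` as `x → ∞`. -/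
theorem statement14
    {Ω : Type*} [MeasurableSpace Ω] (P : Measure Ω) [IsProbabilityMeasure P]
    {d : ℕ} (hd : 1 ≤ d) {A : Set (Fin d → ℝ)} (hA : InRfam d A)
    {r : ℝ} (hr : 0 ≤ r) {T : ℝ} (hT : 0 < T)
    (F : Measure (Fin d → ℝ)) [IsProbabilityMeasure F]
    (X : ℕ → Ω → Fin d → ℝ) (τ : ℕ → Ω → ℝ)
    (hXmeas : ∀ i, Measurable (X i)) (hτmeas : ∀ i, Measurable (τ i))
    (hXnn : ∀ i ω k, 0 ≤ X i ω k)
    (hXdist : ∀ i, P.map (X i) = F)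
    (hτnn : ∀ i ω, 0 ≤ τ i ω) (hτmono : ∀ i ω, τ i ω ≤ τ (i + 1) ω)
    (hindep : IndepFun (fun ω i => X i ω) (fun ω i => τ i ω) P)
    (hmfin : ∀ t : ℝ, (∑' i : ℕ, P {ω | τ i ω ≤ t}) ≠ ⊤)
    (hmT : 0 < ∑' i : ℕ, P {ω | τ i ω ≤ T})
    {C : ℝ} (hC : 0 ≤ C) (h32 : Assumption32 P τ T C)
    (hRD : RDA P A X)
    (hFA : ∀ x : ℝ, 0 < x → 0 < F (x • A)) :
    Tendsto (fun x : ℝ =>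
        (P {ω | 1 ≤ Jcount r X τ A T x ω}).toReal /
          ∑' i : ℕ, (P {ω | τ i ω ≤ T ∧ Real.exp (-(r * τ i ω)) • X i ω ∈ x • A}).toReal)
      atTop (𝓝 1) := by
  classical
  obtain ⟨x₀, hx₀, K, hKpos, hRDw⟩ := hRD
  -- basic objects
  let E : ℝ → ℕ → Set Ω := fun x i =>
    {ω | τ i ω ≤ T ∧ Real.exp (-(r * τ i ω)) • X i ω ∈ x • A}
  let W : ℝ → ℝ → ℝ≥0∞ := fun x s => F ((x * Real.exp (r * s)) • A)
  let h : ℝ → ℝ → ℝ≥0∞ := fun x => (Icc 0 T).indicator (W x)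
  let Λ : ℝ → ℝ≥0∞ := fun x => ∑' i, P (E x i)
  have mTfin : (∑' i : ℕ, P {ω | τ i ω ≤ T}) ≠ ⊤ := hmfin T
  have hindiv : ∀ i : ℕ, IndepFun (τ i) (X i) P := fun i =>
    hindep.symm.comp (measurable_pi_apply i) (measurable_pi_apply i)
  have hPMτ : ∀ i, IsProbabilityMeasure (P.map (τ i)) := fun i =>
    Measure.isProbabilityMeasure_map (hτmeas i).aemeasurable
  -- measurability of events
  have hEmeas : ∀ x : ℝ, 0 < x → ∀ i, MeasurableSet (E x i) := by
    intro x hx i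
    have h1 : MeasurableSet {ω | τ i ω ≤ T} := (hτmeas i) measurableSet_Iic
    have hco : Continuous fun p : ℝ × (Fin d → ℝ) => Real.exp (-(r * p.1)) • p.2 :=
      (Real.continuous_exp.comp (continuous_const.mul continuous_fst).neg).smul continuous_snd
    have h2 : MeasurableSet ((fun ω => (τ i ω, X i ω)) ⁻¹'
        ((fun p : ℝ × (Fin d → ℝ) => Real.exp (-(r * p.1)) • p.2) ⁻¹' (x • A))) :=
      ((hτmeas i).prodMk (hXmeas i)) (hco.measurable ((hA.1.smul₀ hx.ne').measurableSet))
    exact h1.inter h2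
  -- single-claim formula
  have hsingle : ∀ x : ℝ, 0 < x → ∀ i, P (E x i) = ∫⁻ s, h x s ∂(P.map (τ i)) :=
    fun x hx i => single_formula hA (hXmeas i) (hτmeas i) (hindiv i) (hXdist i) (hτnn i) hx
  -- finiteness / comparison with m(T)
  have hΛle : ∀ x : ℝ, Λ x ≤ ∑' i : ℕ, P {ω | τ i ω ≤ T} :=
    fun x => ENNReal.tsum_le_tsum fun i => measure_mono fun ω hω => hω.1
  have hΛfin : ∀ x : ℝ, Λ x ≠ ⊤ := fun x => ((hΛle x).trans_lt (lt_top_iff_ne_top.2 mTfin)).ne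
  -- independence product formula
  have hprod : ∀ i : ℕ, ∀ B : Set (Fin d → ℝ), MeasurableSet B →
      P ({ω | τ i ω ≤ T} ∩ X i ⁻¹' B) = P {ω | τ i ω ≤ T} * F B := by
    intro i B hB
    have := (indepFun_iff_measure_inter_preimage_eq_mul.1 (hindiv i))
      (Iic T) B measurableSet_Iic hB
    rw [← hXdist i, Measure.map_apply (hXmeas i) hB]
    exact this
  -- upper bound for Λ
  have hΛub : ∀ x : ℝ, 0 < x → Λ x ≤ (∑' i : ℕ, P {ω | τ i ω ≤ T}) * F (x • A) := by
    intro x hx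
    have hEsub : ∀ i, E x i ⊆ {ω | τ i ω ≤ T} ∩ X i ⁻¹' (x • A) := by
      rintro i ω ⟨h1, h2⟩
      refine ⟨h1, ?_⟩
      have h3 : X i ω ∈ (x * Real.exp (r * τ i ω)) • A := (exp_smul_mem_iff hx _).1 h2
      exact mem_smul_anti hA (hXnn i ω) hx
        (le_mul_of_one_le_right hx.le (Real.one_le_exp (mul_nonneg hr (hτnn i ω)))) h3
    calc Λ x ≤ ∑' i, P ({ω | τ i ω ≤ T} ∩ X i ⁻¹' (x • A)) :=
          ENNReal.tsum_le_tsum fun i => measure_mono (hEsub i)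
      _ = ∑' i, P {ω | τ i ω ≤ T} * F (x • A) := by
          exact tsum_congr fun i => hprod i _ ((hA.1.smul₀ hx.ne').measurableSet)
      _ = (∑' i : ℕ, P {ω | τ i ω ≤ T}) * F (x • A) := ENNReal.tsum_mul_right
  -- positivity of Λ
  have hΛpos : ∀ x : ℝ, 0 < x → 0 < Λ x := by
    intro x hx
    obtain ⟨i, hi⟩ : ∃ i, 0 < P {ω | τ i ω ≤ T} := by
      by_contra hc
      push_neg at hc
      have hz : ∀ i, P {ω | τ i ω ≤ T} = 0 := fun i => le_antisymm (hc i) (zero_le)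
      simp [hz] at hmT
    have hxT : (0:ℝ) < x * Real.exp (r * T) := by positivity
    have hsub : {ω | τ i ω ≤ T} ∩ X i ⁻¹' ((x * Real.exp (r * T)) • A) ⊆ E x i := by
      rintro ω ⟨h1, h2⟩
      refine ⟨h1, ?_⟩
      rw [exp_smul_mem_iff hx]
      refine mem_smul_anti hA (hXnn i ω) (by positivity) ?_ h2
      exact mul_le_mul_of_nonneg_left
        (Real.exp_le_exp.2 (mul_le_mul_of_nonneg_left h1 hr)) hx.le
    have hpos : 0 < P ({ω | τ i ω ≤ T} ∩ X i ⁻¹' ((x * Real.exp (r * T)) • A)) := by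
      rw [hprod i _ ((hA.1.smul₀ hxT.ne').measurableSet)]
      exact ENNReal.mul_pos hi.ne' (hFA _ hxT).ne'
    exact lt_of_lt_of_le hpos ((measure_mono hsub).trans (ENNReal.le_tsum i))
  -- the counting set is the union
  have hunion : ∀ x : ℝ, {ω | 1 ≤ Jcount r X τ A T x ω} = ⋃ i, E x i := by
    intro x
    ext ω
    simp only [mem_setOf_eq, mem_iUnion]
    have hJ : Jcount r X τ A T x ω = ∑' i, (E x i).indicator (fun _ => (1:ℝ≥0∞)) ω := rfl
    constructor
    · intro h1
      by_contra hc
      push_neg at hc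
      have hz : Jcount r X τ A T x ω = 0 := by
        rw [hJ]
        exact ENNReal.tsum_eq_zero.2 fun i => indicator_of_notMem (hc i) _
      rw [hz] at h1
      exact (by norm_num : ¬ (1:ℝ≥0∞) ≤ 0) h1
    · rintro ⟨i, hi⟩
      calc (1:ℝ≥0∞) = (E x i).indicator (fun _ => (1:ℝ≥0∞)) ω := (indicator_of_mem hi fun _ => (1:ℝ≥0∞)).symm
        _ ≤ Jcount r X τ A T x ω := hJ ▸ ENNReal.le_tsum i
  -- the pair bound
  have hΔbound : ∀ x : ℝ, x₀ < x → 0 < x →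
      (∑' p : {p : ℕ × ℕ // p.1 ≠ p.2}, P (E x p.1.1 ∩ E x p.1.2))
        ≤ ENNReal.ofReal C * (ENNReal.ofReal K * (Λ x * Λ x)) := by
    intro x hx₀x hx
    have hhm : Measurable (h x) := (measurable_W hA F hx).indicator measurableSet_Icc
    set g : ℝ × ℝ → ℝ≥0∞ := fun st => ENNReal.ofReal K * (h x st.1 * h x st.2) with hgdef
    have hgm : Measurable g :=
      ((hhm.comp measurable_fst).mul (hhm.comp measurable_snd)).const_mul _
    have hsq : MeasurableSet (Icc (0:ℝ) T ×ˢ Icc (0:ℝ) T) :=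
      measurableSet_Icc.prod measurableSet_Icc
    have hgeq : g = (Icc (0:ℝ) T ×ˢ Icc (0:ℝ) T).indicator g := by
      funext st
      by_cases hst : st ∈ Icc (0:ℝ) T ×ˢ Icc (0:ℝ) T
      · rw [indicator_of_mem hst]
      · rw [indicator_of_notMem hst]
        rcases not_and_or.1 ((Set.mem_prod).not.1 hst) with h1 | h2
        · show ENNReal.ofReal K *
            ((Icc (0:ℝ) T).indicator (W x) st.1 * (Icc (0:ℝ) T).indicator (W x) st.2) = 0
          rw [indicator_of_notMem h1]
          simp
        · show ENNReal.ofReal K *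
            ((Icc (0:ℝ) T).indicator (W x) st.1 * (Icc (0:ℝ) T).indicator (W x) st.2) = 0
          rw [indicator_of_notMem (a := st.2) h2]
          simp
    have hstepA : (∑' p : {p : ℕ × ℕ // p.1 ≠ p.2}, P (E x p.1.1 ∩ E x p.1.2))
        ≤ ∫⁻ st, g st ∂(secondFactorial P τ) := by
      rw [secondFactorial, lintegral_sum_measure]
      exact ENNReal.tsum_le_tsum fun p =>
        pair_bound_integral hA hr X τ hXmeas hτmeas hXnn hXdist hτnn hindep
          hKpos.le hRDw hx₀x hx p.2
    have hrestr : (secondFactorial P τ).restrict (Icc (0:ℝ) T ×ˢ Icc (0:ℝ) T)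
        ≤ (ENNReal.ofReal C) • ((nuProd P τ).restrict (Icc (0:ℝ) T ×ˢ Icc (0:ℝ) T)) := by
      refine Measure.le_iff.2 fun B hB => ?_
      rw [Measure.restrict_apply hB, Measure.smul_apply, Measure.restrict_apply hB, smul_eq_mul]
      exact h32 _ (hB.inter hsq) inter_subset_right
    have hstepB : ∫⁻ st, g st ∂(secondFactorial P τ)
        ≤ ENNReal.ofReal C * ∫⁻ st, g st ∂(nuProd P τ) := by
      calc ∫⁻ st, g st ∂(secondFactorial P τ)
          = ∫⁻ st, (Icc (0:ℝ) T ×ˢ Icc (0:ℝ) T).indicator g st ∂(secondFactorial P τ) := by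
            rw [← hgeq]
        _ = ∫⁻ st, g st ∂((secondFactorial P τ).restrict (Icc (0:ℝ) T ×ˢ Icc (0:ℝ) T)) := by
            rw [lintegral_indicator hsq]
        _ ≤ ∫⁻ st, g st
              ∂((ENNReal.ofReal C) • ((nuProd P τ).restrict (Icc (0:ℝ) T ×ˢ Icc (0:ℝ) T))) :=
            lintegral_mono' hrestr le_rfl
        _ = ENNReal.ofReal C
              * ∫⁻ st, g st ∂((nuProd P τ).restrict (Icc (0:ℝ) T ×ˢ Icc (0:ℝ) T)) :=
            lintegral_smul_measure _ _
        _ = ENNReal.ofReal C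
              * ∫⁻ st, (Icc (0:ℝ) T ×ˢ Icc (0:ℝ) T).indicator g st ∂(nuProd P τ) := by
            rw [lintegral_indicator hsq]
        _ = ENNReal.ofReal C * ∫⁻ st, g st ∂(nuProd P τ) := by rw [← hgeq]
    have hstepC : ∫⁻ st, g st ∂(nuProd P τ) = ENNReal.ofReal K * (Λ x * Λ x) := by
      rw [nuProd, lintegral_sum_measure]
      have hterm : ∀ p : ℕ × ℕ, ∫⁻ st, g st ∂(mprod (P.map (τ p.1)) (P.map (τ p.2)))
          = ENNReal.ofReal K * (P (E x p.1) * P (E x p.2)) := by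
        intro p
        haveI := hPMτ p.1
        haveI := hPMτ p.2
        rw [mprod_eq_prod]
        calc ∫⁻ st, ENNReal.ofReal K * (h x st.1 * h x st.2)
              ∂((P.map (τ p.1)).prod (P.map (τ p.2)))
            = ENNReal.ofReal K * ∫⁻ st, h x st.1 * h x st.2
                ∂((P.map (τ p.1)).prod (P.map (τ p.2))) :=
              lintegral_const_mul _ ((hhm.comp measurable_fst).mul (hhm.comp measurable_snd))
          _ = ENNReal.ofReal K
                * ((∫⁻ s, h x s ∂(P.map (τ p.1))) * ∫⁻ s, h x s ∂(P.map (τ p.2))) := by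
              rw [lintegral_prod_mul hhm.aemeasurable hhm.aemeasurable]
          _ = ENNReal.ofReal K * (P (E x p.1) * P (E x p.2)) := by
              rw [← hsingle x hx p.1, ← hsingle x hx p.2]
      calc (∑' p : ℕ × ℕ, ∫⁻ st, g st ∂(mprod (P.map (τ p.1)) (P.map (τ p.2))))
          = ∑' p : ℕ × ℕ, ENNReal.ofReal K * (P (E x p.1) * P (E x p.2)) :=
            tsum_congr hterm
        _ = ∑' (i : ℕ) (j : ℕ), ENNReal.ofReal K * (P (E x i) * P (E x j)) :=
            ENNReal.tsum_prod (f := fun i j => ENNReal.ofReal K * (P (E x i) * P (E x j)))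
        _ = ∑' (i : ℕ), (ENNReal.ofReal K * P (E x i)) * Λ x := by
            refine tsum_congr fun i => ?_
            rw [← ENNReal.tsum_mul_left]
            refine tsum_congr fun j => by ring
        _ = ENNReal.ofReal K * (Λ x * Λ x) := by
            rw [ENNReal.tsum_mul_right, ENNReal.tsum_mul_left]
            ring
    exact hstepA.trans (hstepB.trans (by rw [hstepC]))
  -- real-valued quantities and the final squeeze
  have hden : ∀ x : ℝ, (∑' i, (P (E x i)).toReal) = (Λ x).toReal :=
    fun x => (ENNReal.tsum_toReal_eq fun i => measure_ne_top _ _).symm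
  have hgoalEq : (fun x : ℝ =>
        (P {ω | 1 ≤ Jcount r X τ A T x ω}).toReal /
          ∑' i : ℕ, (P {ω | τ i ω ≤ T ∧ Real.exp (-(r * τ i ω)) • X i ω ∈ x • A}).toReal)
      = fun x : ℝ => (P (⋃ i, E x i)).toReal / (Λ x).toReal := by
    funext x
    show (P {ω | 1 ≤ Jcount r X τ A T x ω}).toReal / (∑' i, (P (E x i)).toReal)
      = (P (⋃ i, E x i)).toReal / (Λ x).toReal
    rw [hunion x, hden x]
  rw [hgoalEq]
  -- limit of Λ in the reals
  have htail : Tendsto (fun x : ℝ => (F (x • A)).toReal) atTop (𝓝 0) := by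
    have h1 := tendsto_smul_measure_zero hA F
    have h2 := (ENNReal.tendsto_toReal (by simp : (0:ℝ≥0∞) ≠ ⊤)).comp h1
    simpa [Function.comp_def] using h2
  have hLr0 : Tendsto (fun x : ℝ => (Λ x).toReal) atTop (𝓝 0) := by
    have hub : ∀ᶠ x : ℝ in atTop, (Λ x).toReal
        ≤ (∑' i : ℕ, P {ω | τ i ω ≤ T}).toReal * (F (x • A)).toReal := by
      filter_upwards [eventually_gt_atTop 0] with x hx
      have := ENNReal.toReal_mono
        (ENNReal.mul_ne_top mTfin (measure_ne_top F _)) (hΛub x hx)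
      rwa [ENNReal.toReal_mul] at this
    have hmul : Tendsto (fun x : ℝ =>
        (∑' i : ℕ, P {ω | τ i ω ≤ T}).toReal * (F (x • A)).toReal) atTop (𝓝 0) := by
      have := htail.const_mul (∑' i : ℕ, P {ω | τ i ω ≤ T}).toReal
      rwa [mul_zero] at this
    exact tendsto_of_tendsto_of_tendsto_of_le_of_le' tendsto_const_nhds hmul
      (Eventually.of_forall fun x => ENNReal.toReal_nonneg) hub
  have hlow : Tendsto (fun x : ℝ => 1 - C * K * (Λ x).toReal) atTop (𝓝 1) := by
    have h2 := hLr0.const_mul (C * K)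
    rw [mul_zero] at h2
    have h3 := (tendsto_const_nhds (α := ℝ) (x := (1:ℝ)) (f := atTop)).sub h2
    simpa using h3
  refine tendsto_of_tendsto_of_tendsto_of_le_of_le' hlow tendsto_const_nhds ?_ ?_
  · -- eventual lower bound
    filter_upwards [eventually_gt_atTop (max x₀ 0)] with x hx
    have hx0 : 0 < x := lt_of_le_of_lt (le_max_right _ _) hx
    have hxx₀ : x₀ < x := lt_of_le_of_lt (le_max_left _ _) hx
    set lr := (Λ x).toReal with hlrdef
    have hlrpos : 0 < lr := ENNReal.toReal_pos (hΛpos x hx0).ne' (hΛfin x)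
    have hbon := bonferroni P (E x) (hEmeas x hx0)
    have hΔ := hΔbound x hxx₀ hx0
    have hfin2 : ENNReal.ofReal C * (ENNReal.ofReal K * (Λ x * Λ x)) ≠ ⊤ :=
      ENNReal.mul_ne_top ENNReal.ofReal_ne_top
        (ENNReal.mul_ne_top ENNReal.ofReal_ne_top
          (ENNReal.mul_ne_top (hΛfin x) (hΛfin x)))
    have hbon2 : Λ x ≤ P (⋃ i, E x i) + ENNReal.ofReal C * (ENNReal.ofReal K * (Λ x * Λ x)) :=
      hbon.trans (by gcongr)
    have hreal : lr ≤ (P (⋃ i, E x i)).toReal + C * (K * (lr * lr)) := by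
      have h1 := ENNReal.toReal_mono
        (ENNReal.add_ne_top.2 ⟨measure_ne_top _ _, hfin2⟩) hbon2
      rw [ENNReal.toReal_add (measure_ne_top _ _) hfin2, ENNReal.toReal_mul,
        ENNReal.toReal_mul, ENNReal.toReal_mul, ENNReal.toReal_ofReal hC,
        ENNReal.toReal_ofReal hKpos.le] at h1
      exact h1
    rw [le_div_iff₀ hlrpos]
    have hring : (1 - C * K * lr) * lr = lr - C * (K * (lr * lr)) := by ring
    rw [hring]
    linarith
  · -- eventual upper bound
    filter_upwards [eventually_gt_atTop (max x₀ 0)] with x hx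
    have hx0 : 0 < x := lt_of_le_of_lt (le_max_right _ _) hx
    have hlrpos : 0 < (Λ x).toReal := ENNReal.toReal_pos (hΛpos x hx0).ne' (hΛfin x)
    rw [div_le_one hlrpos]
    exact ENNReal.toReal_mono (hΛfin x) (measure_iUnion_le _)
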